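/- arXiv:1405.2003 — 4 statements merged into one kernel-verified Lean document; each statement's English description precedes it below -/
import Mathlib

section
/- Let G be a Lie group with Lie algebra 𝔤. There exists a neighborhood O of 0 in 𝔤 such that for every X ∈ O and every linear subspace 𝔥 of 𝔤, one has (Ad e^X)𝔥 ⊆ 𝔥 if and only if (ad X)𝔥 ⊆ 𝔥. -/
open Metric Set Pointwise Topology

section Helpers

variable {𝔸 : Type*} [NormedRing 𝔸] [NormedAlgebra ℝ 𝔸]

/-- In a normed ring, `‖u ^ n * w‖ ≤ ‖u‖ ^ n * ‖w‖`. -/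
lemma aux_norm_pow_mul_le (u w : 𝔸) : ∀ n : ℕ, ‖u ^ n * w‖ ≤ ‖u‖ ^ n * ‖w‖ := by
  intro n
  induction n generalizing w with
  | zero => simp
  | succ n ih =>
    have h1 : u ^ (n + 1) * w = u ^ n * (u * w) := by
      rw [pow_succ, mul_assoc]
    rw [h1]
    calc ‖u ^ n * (u * w)‖ ≤ ‖u‖ ^ n * ‖u * w‖ := ih (u * w)
      _ ≤ ‖u‖ ^ n * (‖u‖ * ‖w‖) :=
          mul_le_mul_of_nonneg_left (norm_mul_le _ _) (by positivity)
      _ = ‖u‖ ^ (n + 1) * ‖w‖ := by ring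

/-- Derivative of a power of a function whose value commutes with its derivative. -/
lemma aux_hasDerivAt_pow_succ_comm {u : ℝ → 𝔸} {d : 𝔸} {t : ℝ}
    (hu : HasDerivAt u d t) (hc : Commute (u t) d) :
    ∀ n : ℕ, HasDerivAt (fun s => u s ^ (n + 1)) (((n : ℝ) + 1) • (u t ^ n * d)) t := by
  intro n
  induction n with
  | zero => simpa using hu
  | succ n ih =>
    have h : HasDerivAt (fun s => u s ^ (n + 1) * u s) _ t := ih.mul hu
    have key : ((n : ℝ) + 1) • (u t ^ n * d) * u t + u t ^ (n + 1) * d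
        = (((n : ℝ) + 1) + 1) • (u t ^ (n + 1) * d) := by
      have h1 : (u t ^ n * d) * u t = u t ^ (n + 1) * d := by
        rw [mul_assoc, ← hc.eq, ← mul_assoc, ← pow_succ]
      rw [smul_mul_assoc, h1]
      module
    have heq : (fun s => u s ^ (n + 1) * u s) = fun s => u s ^ (n + 1 + 1) := by
      funext s; exact (pow_succ (u s) (n + 1)).symm
    rw [heq] at h
    have hcast : (((n + 1 : ℕ) : ℝ) + 1) • (u t ^ (n + 1) * d)
        = (((n : ℝ) + 1) + 1) • (u t ^ (n + 1) * d) := by push_cast; ring_nf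
    rw [hcast, ← key]
    exact h

variable [CompleteSpace 𝔸]

/-- Quantitative bound: if `‖x‖ ≤ 3/8` then `‖exp x - 1‖ ≤ 3/5`. -/
lemma aux_norm_exp_sub_one_le {x : 𝔸} (hx : ‖x‖ ≤ 3 / 8) :
    ‖NormedSpace.exp x - 1‖ ≤ 3 / 5 := by
  have hs : Summable fun n : ℕ => ((Nat.factorial n : ℝ))⁻¹ • x ^ n :=
    NormedSpace.expSeries_summable' (𝕂 := ℝ) x
  have h0 : NormedSpace.exp x
      = ((Nat.factorial 0 : ℝ))⁻¹ • x ^ 0 + ∑' n : ℕ, ((Nat.factorial (n + 1) : ℝ))⁻¹ • x ^ (n + 1) := by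
    rw [congrFun (NormedSpace.exp_eq_tsum (𝕂 := ℝ)) x]
    exact hs.tsum_eq_zero_add
  have h1 : NormedSpace.exp x - 1 = ∑' n : ℕ, ((Nat.factorial (n + 1) : ℝ))⁻¹ • x ^ (n + 1) := by
    simp only [Nat.factorial_zero, Nat.cast_one, inv_one, pow_zero, one_smul] at h0
    rw [h0]; abel
  rw [h1]
  have hgeo : HasSum (fun n : ℕ => (3 / 8 : ℝ) ^ (n + 1)) (3 / 5) := by
    have h := (hasSum_geometric_of_lt_one (by norm_num : (0:ℝ) ≤ 3/8)
      (by norm_num : (3/8 : ℝ) < 1)).mul_left (3/8 : ℝ)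
    have heq : (3/8 : ℝ) * (1 - 3/8)⁻¹ = 3/5 := by norm_num
    rw [heq] at h
    simpa only [← pow_succ'] using h
  refine tsum_of_norm_bounded hgeo fun n => ?_
  rw [norm_smul]
  calc ‖((Nat.factorial (n + 1) : ℝ))⁻¹‖ * ‖x ^ (n + 1)‖
      ≤ 1 * ‖x‖ ^ (n + 1) := by
        gcongr
        · rw [Real.norm_eq_abs, abs_of_nonneg (by positivity)]
          rw [inv_le_one_iff₀]
          right
          exact_mod_cast Nat.one_le_iff_ne_zero.mpr (Nat.factorial_ne_zero _)
        · exact norm_pow_le' x (Nat.succ_pos n)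
    _ ≤ (3 / 8) ^ (n + 1) := by
        rw [one_mul]
        exact pow_le_pow_left₀ (norm_nonneg x) hx _

/-- The logarithm series of `exp T` sums to `T` for small `T`. -/
lemma aux_log_exp_hasSum {T : 𝔸} (hT : ‖T‖ ≤ 1 / 4) :
    HasSum (fun n : ℕ => (((-1 : ℝ) ^ n / ((n : ℝ) + 1)) •
      (NormedSpace.exp T - 1) ^ (n + 1))) T := by
  set A : ℝ → 𝔸 := fun t => NormedSpace.exp (t • T) with hA_def
  set g : ℕ → ℝ → 𝔸 :=
    fun n t => ((-1 : ℝ) ^ n / ((n : ℝ) + 1)) • (A t - 1) ^ (n + 1) with hg_def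
  set g' : ℕ → ℝ → 𝔸 :=
    fun n t => ((-1 : ℝ) ^ n) • ((A t - 1) ^ n * (T * A t)) with hg'_def
  set s : Set ℝ := Metric.ball (0 : ℝ) (3 / 2) with hs_def
  have hs_open : IsOpen s := isOpen_ball
  have hs_conn : IsPreconnected s := (convex_ball (0:ℝ) (3/2)).isPreconnected
  have h0s : (0 : ℝ) ∈ s := by norm_num [hs_def]
  have h1s : (1 : ℝ) ∈ s := by
    simp only [hs_def, Metric.mem_ball, dist_zero_right, norm_one]; norm_num
  -- basic estimates on s
  have htT : ∀ t ∈ s, ‖t • T‖ ≤ 3 / 8 := by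
    intro t ht
    rw [norm_smul, Real.norm_eq_abs]
    have habs : |t| ≤ 3 / 2 := by
      have := Metric.mem_ball.mp ht
      rw [Real.dist_eq, sub_zero] at this
      linarith [this]
    calc |t| * ‖T‖ ≤ (3/2) * (1/4) := by
          exact mul_le_mul habs hT (norm_nonneg T) (by norm_num)
      _ = 3 / 8 := by norm_num
  have hu_bound : ∀ t ∈ s, ‖A t - 1‖ ≤ 3 / 5 := fun t ht =>
    aux_norm_exp_sub_one_le (htT t ht)
  have hcommT : ∀ t : ℝ, Commute T (A t) := fun t =>
    ((Commute.refl T).smul_right t).exp_right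
  -- the derivative of each term
  have hderiv : ∀ n : ℕ, ∀ t : ℝ, HasDerivAt (g n) (g' n t) t := by
    intro n t
    have hA : HasDerivAt A (T * A t) t := hasDerivAt_exp_smul_const' (𝕂 := ℝ) T t
    have hu' : HasDerivAt (fun s => A s - 1) (T * A t) t := hA.sub_const 1
    have hc1 : Commute (A t) (T * A t) :=
      (hcommT t).symm.mul_right (Commute.refl (A t))
    have hc : Commute (A t - 1) (T * A t) :=
      hc1.sub_left (Commute.one_left _)
    have hp := aux_hasDerivAt_pow_succ_comm hu' hc n
    have := hp.const_smul ((-1 : ℝ) ^ n / ((n : ℝ) + 1))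
    exact this.congr_deriv (by rw [smul_smul, div_mul_cancel₀]; positivity)
  -- the bound on derivatives
  have hbound : ∀ n : ℕ, ∀ t ∈ s, ‖g' n t‖ ≤ (2/5) * (3/5) ^ n := by
    intro n t ht
    have h1 : ‖g' n t‖ = ‖(A t - 1) ^ n * (T * A t)‖ := by
      rw [hg'_def]
      simp only [norm_smul, norm_pow, norm_neg, norm_one, one_pow, one_mul,
        Real.norm_eq_abs, abs_pow, abs_neg, abs_one]
    have hTA : ‖T * A t‖ ≤ 2 / 5 := by
      have heq : T * A t = T + T * (A t - 1) := by
        rw [mul_sub, mul_one]; abel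
      rw [heq]
      calc ‖T + T * (A t - 1)‖ ≤ ‖T‖ + ‖T‖ * ‖A t - 1‖ :=
            (norm_add_le _ _).trans (by gcongr; exact norm_mul_le _ _)
        _ ≤ 1/4 + (1/4) * (3/5) := by
            gcongr
            exact hu_bound t ht
        _ = 2 / 5 := by norm_num
    rw [h1]
    calc ‖(A t - 1) ^ n * (T * A t)‖ ≤ ‖A t - 1‖ ^ n * ‖T * A t‖ :=
          aux_norm_pow_mul_le _ _ n
      _ ≤ (3/5) ^ n * (2/5) :=
          mul_le_mul (pow_le_pow_left₀ (norm_nonneg _) (hu_bound t ht) n) hTA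
            (norm_nonneg _) (by positivity)
      _ = (2/5) * (3/5) ^ n := by ring
  have hu_sum : Summable fun n : ℕ => (2/5 : ℝ) * (3/5) ^ n :=
    (summable_geometric_of_lt_one (by norm_num) (by norm_num)).mul_left _
  have hg0 : Summable fun n : ℕ => g n 0 := by
    have : ∀ n : ℕ, g n 0 = 0 := by
      intro n
      rw [hg_def]
      simp [hA_def, NormedSpace.exp_zero, zero_pow (Nat.succ_ne_zero n)]
    simpa [this] using summable_zero
  -- the sum of the derivatives is T
  have hsum_deriv : ∀ t ∈ s, ∑' n : ℕ, g' n t = T := by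
    intro t ht
    have hlt : ‖-(A t - 1)‖ < 1 := by
      rw [norm_neg]
      exact lt_of_le_of_lt (hu_bound t ht) (by norm_num)
    have hgeo : (∑' i : ℕ, (-(A t - 1)) ^ i) * (1 - -(A t - 1)) = 1 :=
      geom_series_mul_neg _ hlt
    have hAe : 1 - -(A t - 1) = A t := by abel
    rw [hAe] at hgeo
    have hterm : ∀ n : ℕ, g' n t = (-(A t - 1)) ^ n * (T * A t) := by
      intro n
      rw [hg'_def]
      have : (-(A t - 1)) ^ n = ((-1 : ℝ) ^ n) • (A t - 1) ^ n := by
        rw [← neg_one_smul ℝ (A t - 1), smul_pow]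
      rw [this, smul_mul_assoc]
    have hsummable : Summable fun n : ℕ => (-(A t - 1)) ^ n :=
      summable_geometric_of_norm_lt_one hlt
    calc ∑' n : ℕ, g' n t = ∑' n : ℕ, (-(A t - 1)) ^ n * (T * A t) := by
          exact tsum_congr hterm
      _ = (∑' n : ℕ, (-(A t - 1)) ^ n) * (T * A t) :=
          hsummable.tsum_mul_right _
      _ = (∑' n : ℕ, (-(A t - 1)) ^ n) * (A t * T) := by rw [(hcommT t).eq]
      _ = ((∑' n : ℕ, (-(A t - 1)) ^ n) * A t) * T := by rw [mul_assoc]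
      _ = T := by rw [hgeo, one_mul]
  -- the derivative of the total sum
  have hderiv_total : ∀ y ∈ s, HasDerivAt (fun t => ∑' n : ℕ, g n t) T y := by
    intro y hy
    have := hasDerivAt_tsum_of_isPreconnected hu_sum hs_open hs_conn
      (fun n t _ => hderiv n t) hbound h0s hg0 hy
    rwa [hsum_deriv y hy] at this
  set h : ℝ → 𝔸 := fun t => ∑' n : ℕ, g n t with hh_def
  have hh0 : h 0 = 0 := by
    rw [hh_def]
    have : ∀ n : ℕ, g n 0 = 0 := by
      intro n
      rw [hg_def]
      simp [hA_def, NormedSpace.exp_zero, zero_pow (Nat.succ_ne_zero n)]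
    simp [this]
  -- mean value: h t - t • T is constant on s
  have hk : ∀ x ∈ s, HasDerivWithinAt (fun t => h t - t • T) (0 : 𝔸) s x := by
    intro x hx
    have h1 := (hderiv_total x hx).sub ((hasDerivAt_id x).smul_const T)
    have h2 := h1.hasDerivWithinAt (s := s)
    simp at h2
    exact h2
  have hconst := (convex_ball (0:ℝ) (3/2)).norm_image_sub_le_of_norm_hasDerivWithin_le
    (f' := fun _ => (0 : 𝔸)) (C := 0) hk (fun x _ => by simp) h0s h1s
  have hh1 : h 1 = T := by
    rw [zero_mul] at hconst
    have h2 : (h 1 - (1:ℝ) • T) - (h 0 - (0:ℝ) • T) = 0 :=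
      norm_le_zero_iff.mp hconst
    rw [hh0, one_smul, zero_smul, sub_zero, sub_zero] at h2
    exact sub_eq_zero.mp h2
  -- summability of the series at t = 1, and conclusion
  have hsummable1 : Summable fun n : ℕ => g n 1 :=
    summable_of_summable_hasDerivAt_of_isPreconnected hu_sum hs_open hs_conn
      (fun n t _ => hderiv n t) hbound h0s hg0 h1s
  have hfinal : HasSum (fun n : ℕ => g n 1) T := by
    have := hsummable1.hasSum
    rwa [show ∑' n : ℕ, g n 1 = T from hh1] at this
  have hg1 : ∀ n : ℕ, g n 1 = ((-1 : ℝ) ^ n / ((n : ℝ) + 1)) •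
      (NormedSpace.exp T - 1) ^ (n + 1) := by
    intro n
    rw [hg_def]
    simp [hA_def, one_smul]
  simpa [hg1] using hfinal

end Helpers

attribute [local instance 2000] SeminormedAddCommGroup.toAddCommGroup

/-- Let `G` be a Lie group with Lie algebra `𝔤`, exponential map `Exp`, adjoint representation
`Ad : G →* GL(𝔤)` and infinitesimal adjoint `ad X = ⁅X, ·⁆`, linked by the standard identity
`Ad (Exp X) = e^{ad X}`. There exists a neighborhood `O` of `0` in `𝔤` such that for every
`X ∈ O` and every linear subspace `𝔥` of `𝔤`, `(Ad e^X) 𝔥 ⊆ 𝔥` iff `(ad X) 𝔥 ⊆ 𝔥`. -/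
theorem ad_stable_iff_Ad_exp_stable
    (G : Type*) [Group G]
    (𝔤 : Type*) [NormedAddCommGroup 𝔤] [NormedSpace ℝ 𝔤] [FiniteDimensional ℝ 𝔤]
    [LieRing 𝔤] [LieAlgebra ℝ 𝔤]
    (Exp : 𝔤 → G) (Ad : G →* (𝔤 ≃ₗ[ℝ] 𝔤)) (ad : 𝔤 →ₗ[ℝ] (𝔤 →L[ℝ] 𝔤))
    (had : ∀ X Y : 𝔤, ad X Y = ⁅X, Y⁆)
    (hAdExp : ∀ X Y : 𝔤, Ad (Exp X) Y = NormedSpace.exp (ad X) Y) :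
    ∃ O ∈ 𝓝 (0 : 𝔤), ∀ X ∈ O, ∀ 𝔥 : Submodule ℝ 𝔤,
      ((∀ Y ∈ 𝔥, Ad (Exp X) Y ∈ 𝔥) ↔ (∀ Y ∈ 𝔥, ⁅X, Y⁆ ∈ 𝔥)) := by
  -- an auxiliary fact: powers of an invariance-preserving operator preserve invariance
  have pow_mem : ∀ (𝔥 : Submodule ℝ 𝔤) (B : 𝔤 →L[ℝ] 𝔤), (∀ Z ∈ 𝔥, B Z ∈ 𝔥) →
      ∀ (m : ℕ), ∀ Z ∈ 𝔥, (B ^ m) Z ∈ 𝔥 := by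
    intro 𝔥 B hB m
    induction m with
    | zero => intro Z hZ; simpa using hZ
    | succ m ih =>
      intro Z hZ
      rw [pow_succ, ContinuousLinearMap.mul_apply]
      exact ih _ (hB Z hZ)
  have hadc : Continuous ad := LinearMap.continuous_of_finiteDimensional ad
  refine ⟨ad ⁻¹' Metric.ball (0 : 𝔤 →L[ℝ] 𝔤) (1/4), ?_, ?_⟩
  · have : Metric.ball (0 : 𝔤 →L[ℝ] 𝔤) (1/4) ∈ 𝓝 (ad (0 : 𝔤)) := by
      rw [map_zero]
      exact Metric.ball_mem_nhds _ (by norm_num)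
    exact hadc.continuousAt.preimage_mem_nhds this
  intro X hX 𝔥
  have hT : ‖ad X‖ < 1/4 := by
    have := Set.mem_preimage.mp hX
    rwa [Metric.mem_ball, dist_zero_right] at this
  have hclosed : IsClosed (𝔥 : Set 𝔤) := Submodule.closed_of_finiteDimensional 𝔥
  constructor
  · -- Ad-invariance implies ad-invariance
    intro h1 Y hY
    have h1' : ∀ Z ∈ 𝔥, (NormedSpace.exp (ad X)) Z ∈ 𝔥 := by
      intro Z hZ
      have := h1 Z hZ
      rwa [hAdExp X Z] at this
    rw [← had X Y]
    -- the log series converges to `ad X` and each term preserves `𝔥`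
    have hsum := aux_log_exp_hasSum (T := ad X) (le_of_lt hT)
    have hsum2 := hsum.mapL (ContinuousLinearMap.apply ℝ 𝔤 Y)
    simp only [ContinuousLinearMap.apply_apply, ContinuousLinearMap.map_smul] at hsum2
    -- membership of each term
    have hB : ∀ Z ∈ 𝔥, (NormedSpace.exp (ad X) - 1) Z ∈ 𝔥 := by
      intro Z hZ
      rw [ContinuousLinearMap.sub_apply, ContinuousLinearMap.one_apply]
      exact 𝔥.sub_mem (h1' Z hZ) hZ
    have hmem : ∀ n : ℕ,
        (((-1 : ℝ) ^ n / ((n : ℝ) + 1)) • (NormedSpace.exp (ad X) - 1) ^ (n + 1)) Y ∈ 𝔥 := by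
      intro n
      rw [ContinuousLinearMap.smul_apply]
      exact 𝔥.smul_mem _ (pow_mem 𝔥 _ hB (n + 1) Y hY)
    refine hclosed.mem_of_tendsto hsum2.tendsto_sum_nat
      (Filter.Eventually.of_forall fun n => ?_)
    exact 𝔥.sum_mem fun i _ => hmem i
  · -- ad-invariance implies Ad-invariance
    intro h2 Y hY
    have h2' : ∀ Z ∈ 𝔥, (ad X) Z ∈ 𝔥 := by
      intro Z hZ
      rw [had X Z]
      exact h2 Z hZ
    rw [hAdExp X Y]
    have hsum : HasSum (fun n : ℕ => ((Nat.factorial n : ℝ))⁻¹ • (ad X) ^ n)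
        (NormedSpace.exp (ad X)) := by
      have := (NormedSpace.expSeries_summable' (𝕂 := ℝ) (ad X)).hasSum
      rwa [← congrFun (NormedSpace.exp_eq_tsum (𝕂 := ℝ)) (ad X)] at this
    have hsum2 := hsum.mapL (ContinuousLinearMap.apply ℝ 𝔤 Y)
    simp only [ContinuousLinearMap.apply_apply, ContinuousLinearMap.map_smul] at hsum2
    have hmem : ∀ n : ℕ, (((Nat.factorial n : ℝ))⁻¹ • (ad X) ^ n) Y ∈ 𝔥 := by
      intro n
      rw [ContinuousLinearMap.smul_apply]
      exact 𝔥.smul_mem _ (pow_mem 𝔥 _ h2' n Y hY)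
    refine hclosed.mem_of_tendsto hsum2.tendsto_sum_nat
      (Filter.Eventually.of_forall fun n => ?_)
    exact 𝔥.sum_mem fun i _ => hmem i
end

section
/- Let V be a finite-dimensional Hilbert space, and let W₁ and W₂ be two distinct linear subspaces of V of the same dimension; set α = d(W₁,W₂). Then there exists a proper linear subspace W₀ of W₁ such that for all r ∈ (0,1), the intersection W₁^{(r)} ∩ W₂^{(r)} is contained in W₀^{(3r/α)}. -/
open Metric Set Topology

/-- Distance between subspaces (as subsets): `d(W,W') = sup {d(u,W') : u ∈ W, ‖u‖ = 1}`. -/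
noncomputable def subDist {V : Type*} [NormedAddCommGroup V] (W W' : Set V) : ℝ :=
  sSup {r | ∃ u ∈ W, ‖u‖ = 1 ∧ r = Metric.infDist u W'}

/-- Let `V` be a finite-dimensional Hilbert space and `W₁ ≠ W₂` two subspaces of the same
dimension, and set `α = d(W₁,W₂)`. Then there is a proper subspace `W₀` of `W₁` such that for all
`r ∈ (0,1)`, `W₁^{(r)} ∩ W₂^{(r)} ⊆ W₀^{(3r/α)}` (open neighborhoods). -/
theorem neighborhoods_of_transverse_subspaces
    {𝕜 : Type*} [RCLike 𝕜] (V : Type*) [NormedAddCommGroup V] [InnerProductSpace 𝕜 V]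
    [FiniteDimensional 𝕜 V]
    (W₁ W₂ : Submodule 𝕜 V) (hne : W₁ ≠ W₂)
    (hdim : Module.finrank 𝕜 W₁ = Module.finrank 𝕜 W₂)
    (α : ℝ) (hα : α = subDist (W₁ : Set V) (W₂ : Set V)) :
    ∃ W₀ : Submodule 𝕜 V, W₀ ≤ W₁ ∧ W₀ ≠ W₁ ∧
      ∀ r : ℝ, 0 < r → r < 1 →
        Metric.thickening r (W₁ : Set V) ∩ Metric.thickening r (W₂ : Set V) ⊆
          Metric.thickening (3 * r / α) (W₀ : Set V) := by
  classical
  haveI : CompleteSpace V := FiniteDimensional.complete 𝕜 V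
  -- The operator measuring distance to W₂
  set T : V →L[𝕜] V := ContinuousLinearMap.id 𝕜 V - W₂.subtypeL.comp (W₂.orthogonalProjectionOnto)
    with hTdef
  have hTdist : ∀ u : V, Metric.infDist u (W₂ : Set V) = ‖T u‖ := by
    intro u
    have h3 : T u = u - (W₂.orthogonalProjectionOnto u : V) := by
      simp [hTdef]
    rw [h3, Submodule.coe_orthogonalProjectionOnto_apply, Submodule.starProjection_minimal, Metric.infDist_eq_iInf]
    exact iInf_congr fun y => (dist_eq_norm _ _)
  set B : W₁ →L[𝕜] V := T.comp W₁.subtypeL with hBdef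
  have hBdist : ∀ u : W₁, Metric.infDist (u : V) (W₂ : Set V) = ‖B u‖ := fun u => hTdist u
  -- W₁ is not contained in W₂
  have hnle : ¬ W₁ ≤ W₂ := fun hle => hne (Submodule.eq_of_le_of_finrank_eq hle hdim)
  obtain ⟨v, hv1, hv2⟩ := SetLike.not_le_iff_exists.mp hnle
  have hv0 : v ≠ 0 := fun h => hv2 (h ▸ W₂.zero_mem)
  have hvK : (‖v‖ : 𝕜) ≠ 0 := by exact_mod_cast norm_ne_zero_iff.mpr hv0
  set u₁ : W₁ := ((‖v‖ : 𝕜))⁻¹ • (⟨v, hv1⟩ : W₁) with hu₁def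
  have hu₁norm : ‖u₁‖ = 1 := by
    rw [hu₁def, norm_smul, norm_inv, RCLike.norm_ofReal, abs_norm]
    exact inv_mul_cancel₀ (norm_ne_zero_iff.mpr hv0)
  -- extract a maximizer on the unit sphere of W₁
  have hsphere : (Metric.sphere (0 : W₁) 1).Nonempty :=
    ⟨u₁, by simp [mem_sphere_iff_norm, hu₁norm]⟩
  obtain ⟨u₀, hu₀mem, hu₀max⟩ := (isCompact_sphere (0 : W₁) 1).exists_isMaxOn hsphere
    (B.continuous.norm.continuousOn)
  have hu₀norm : ‖u₀‖ = 1 := by simpa [mem_sphere_iff_norm] using hu₀mem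
  -- identify α
  have hSeq : {r | ∃ u ∈ (W₁ : Set V), ‖u‖ = 1 ∧ r = Metric.infDist u (W₂ : Set V)}
      = (fun u : W₁ => ‖B u‖) '' Metric.sphere 0 1 := by
    ext r
    constructor
    · rintro ⟨u, hu, hunorm, rfl⟩
      exact ⟨⟨u, hu⟩, by simpa [mem_sphere_iff_norm] using hunorm, (hBdist ⟨u, hu⟩).symm⟩
    · rintro ⟨u, hu, rfl⟩
      exact ⟨(u : V), u.2, by simpa [mem_sphere_iff_norm] using hu, (hBdist u).symm⟩
  have hgreat : IsGreatest ((fun u : W₁ => ‖B u‖) '' Metric.sphere 0 1) ‖B u₀‖ :=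
    ⟨⟨u₀, hu₀mem, rfl⟩, by rintro r ⟨u, hu, rfl⟩; exact hu₀max hu⟩
  have hαval : α = ‖B u₀‖ := by
    rw [hα, subDist, hSeq]
    exact hgreat.csSup_eq
  -- α > 0
  have hW₂closed : IsClosed (W₂ : Set V) := Submodule.closed_of_finiteDimensional W₂
  have hu₁notmem : (u₁ : V) ∉ (W₂ : Set V) := by
    intro hmem
    apply hv2
    have hcoe : (u₁ : V) = ((‖v‖ : 𝕜))⁻¹ • v := rfl
    have h2 : (‖v‖ : 𝕜) • (u₁ : V) ∈ W₂ := W₂.smul_mem _ hmem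
    rw [hcoe, smul_smul, mul_inv_cancel₀ hvK, one_smul] at h2
    exact h2
  have hαpos : 0 < α := by
    have h1 : 0 < Metric.infDist (u₁ : V) (W₂ : Set V) :=
      (hW₂closed.notMem_iff_infDist_pos ⟨0, W₂.zero_mem⟩).mp hu₁notmem
    have h2 : ‖B u₁‖ ≤ ‖B u₀‖ := hu₀max (by simp [mem_sphere_iff_norm, hu₁norm])
    rw [hαval]
    calc (0:ℝ) < Metric.infDist (u₁ : V) (W₂ : Set V) := h1
      _ = ‖B u₁‖ := hBdist u₁
      _ ≤ ‖B u₀‖ := h2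
  have hαle1 : α ≤ 1 := by
    rw [hαval, ← hBdist u₀]
    have h := Metric.infDist_le_dist_of_mem (show (0 : V) ∈ (W₂ : Set V) from W₂.zero_mem)
      (x := (u₀ : V))
    calc Metric.infDist (u₀ : V) (W₂ : Set V) ≤ dist (u₀ : V) 0 := h
      _ = ‖u₀‖ := by rw [dist_zero_right]; rfl
      _ = 1 := hu₀norm
  -- the self-adjoint operator A = B† B and its top eigenvector u₀
  set A : W₁ →L[𝕜] W₁ := (ContinuousLinearMap.adjoint B).comp B with hAdef
  have hAsa : IsSelfAdjoint A := by
    rw [IsSelfAdjoint, ContinuousLinearMap.star_eq_adjoint, hAdef,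
      ContinuousLinearMap.adjoint_comp, ContinuousLinearMap.adjoint_adjoint]
  have hre : ∀ u : W₁, A.reApplyInnerSelf u = ‖B u‖ ^ 2 := fun u =>
    (ContinuousLinearMap.apply_norm_sq_eq_inner_adjoint_left B u).symm
  have hmax2 : IsMaxOn A.reApplyInnerSelf (Metric.sphere (0 : W₁) ‖u₀‖) u₀ := by
    rw [hu₀norm]
    intro u hu
    simp only [Set.mem_setOf_eq, hre]
    exact pow_le_pow_left₀ (norm_nonneg _) (hu₀max hu) 2
  have hu₀ne : u₀ ≠ 0 := by
    intro h
    rw [h, norm_zero] at hu₀norm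
    norm_num at hu₀norm
  have heig := hAsa.hasEigenvector_of_isLocalExtrOn hu₀ne (Or.inr hmax2.localize)
  have hray : A.rayleighQuotient u₀ = α ^ 2 := by
    rw [ContinuousLinearMap.rayleighQuotient, hre, hu₀norm, hαval]
    norm_num
  have heq : A u₀ = ((α ^ 2 : ℝ) : 𝕜) • u₀ := by
    have h := heig.apply_eq_smul
    rw [hray] at h
    exact h
  -- the subspace W₀
  refine ⟨W₁ ⊓ (𝕜 ∙ (u₀ : V))ᗮ, inf_le_left, ?_, ?_⟩
  · intro hW
    have hmem : (u₀ : V) ∈ W₁ ⊓ (𝕜 ∙ (u₀ : V))ᗮ := by rw [hW]; exact u₀.2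
    have h2 := (Submodule.mem_inf.mp hmem).2
    rw [Submodule.mem_orthogonal_singleton_iff_inner_right, inner_self_eq_zero] at h2
    exact hu₀ne (by ext; simp [h2])
  · intro r hr0 hr1 x hx
    obtain ⟨hx1, hx2⟩ := hx
    obtain ⟨w₁, hw₁mem, hw₁⟩ := Metric.mem_thickening_iff.mp hx1
    obtain ⟨w₂, hw₂mem, hw₂⟩ := Metric.mem_thickening_iff.mp hx2
    set w : W₁ := ⟨w₁, hw₁mem⟩ with hwdef
    have hBw : ‖B w‖ < 2 * r := by
      rw [← hBdist w]
      calc Metric.infDist (w : V) (W₂ : Set V) ≤ dist w₁ w₂ :=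
            Metric.infDist_le_dist_of_mem hw₂mem
        _ ≤ dist w₁ x + dist x w₂ := dist_triangle _ _ _
        _ < r + r := add_lt_add (by rwa [dist_comm]) hw₂
        _ = 2 * r := by ring
    set c : 𝕜 := inner 𝕜 u₀ w with hcdef
    -- key estimate : α * ‖c‖ ≤ ‖B w‖
    have hinner : (inner 𝕜 (B w) (B u₀) : 𝕜) = ((α ^ 2 : ℝ) : 𝕜) * (starRingEnd 𝕜) c := by
      calc (inner 𝕜 (B w) (B u₀) : 𝕜)
          = inner 𝕜 (w : W₁) ((ContinuousLinearMap.adjoint B) (B u₀)) :=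
            (ContinuousLinearMap.adjoint_inner_right B w (B u₀)).symm
        _ = inner 𝕜 (w : W₁) (A u₀) := rfl
        _ = inner 𝕜 (w : W₁) (((α ^ 2 : ℝ) : 𝕜) • u₀) := by rw [heq]
        _ = ((α ^ 2 : ℝ) : 𝕜) * inner 𝕜 (w : W₁) u₀ := inner_smul_right _ _ _
        _ = ((α ^ 2 : ℝ) : 𝕜) * (starRingEnd 𝕜) c := by rw [hcdef, inner_conj_symm]
    have hkey : α * ‖c‖ ≤ ‖B w‖ := by
      have hcs : ‖(inner 𝕜 (B w) (B u₀) : 𝕜)‖ ≤ ‖B w‖ * ‖B u₀‖ := norm_inner_le_norm _ _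
      rw [hinner] at hcs
      have hnorm : ‖((α ^ 2 : ℝ) : 𝕜) * (starRingEnd 𝕜) c‖ = α ^ 2 * ‖c‖ := by
        rw [norm_mul, RCLike.norm_ofReal, RCLike.norm_conj, abs_of_nonneg (sq_nonneg α)]
      rw [hnorm, ← hαval] at hcs
      have : α * (α * ‖c‖) ≤ α * ‖B w‖ := by
        calc α * (α * ‖c‖) = α ^ 2 * ‖c‖ := by ring
          _ ≤ ‖B w‖ * α := hcs
          _ = α * ‖B w‖ := mul_comm _ _
      exact le_of_mul_le_mul_left this hαpos
    have hc : ‖c‖ < 2 * r / α := by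
      rw [lt_div_iff₀ hαpos]
      calc ‖c‖ * α = α * ‖c‖ := mul_comm _ _
        _ ≤ ‖B w‖ := hkey
        _ < 2 * r := hBw
    -- the approximating point in W₀
    have hporth : w₁ - c • (u₀ : V) ∈ (𝕜 ∙ (u₀ : V))ᗮ := by
      rw [Submodule.mem_orthogonal_singleton_iff_inner_right]
      have h1 : (inner 𝕜 (u₀ : V) w₁ : 𝕜) = c := by
        rw [hcdef, Submodule.coe_inner]
      have h2 : (inner 𝕜 (u₀ : V) (u₀ : V) : 𝕜) = 1 := by
        rw [inner_self_eq_norm_sq_to_K]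
        have hc1 : ‖(u₀ : V)‖ = 1 := hu₀norm
        rw [hc1]; norm_num
      rw [inner_sub_right, inner_smul_right, h1, h2, mul_one, sub_self]
    have hpmem : w₁ - c • (u₀ : V) ∈ W₁ ⊓ (𝕜 ∙ (u₀ : V))ᗮ :=
      Submodule.mem_inf.mpr
        ⟨Submodule.sub_mem _ hw₁mem (Submodule.smul_mem _ _ u₀.2), hporth⟩
    refine Metric.mem_thickening_iff.mpr ⟨w₁ - c • (u₀ : V), hpmem, ?_⟩
    have hdist1 : dist w₁ (w₁ - c • (u₀ : V)) = ‖c‖ := by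
      rw [dist_eq_norm, sub_sub_cancel, norm_smul,
        show ‖(u₀ : V)‖ = 1 from hu₀norm, mul_one]
    have hd : dist x (w₁ - c • (u₀ : V)) ≤ dist x w₁ + ‖c‖ := by
      calc dist x (w₁ - c • (u₀ : V)) ≤ dist x w₁ + dist w₁ (w₁ - c • (u₀ : V)) :=
            dist_triangle _ _ _
        _ = dist x w₁ + ‖c‖ := by rw [hdist1]
    have hrle : r ≤ r / α := by
      rw [le_div_iff₀ hαpos]
      exact mul_le_of_le_one_right hr0.le hαle1
    calc dist x (w₁ - c • (u₀ : V)) ≤ dist x w₁ + ‖c‖ := hd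
      _ < r + 2 * r / α := add_lt_add hw₁ hc
      _ ≤ r / α + 2 * r / α := add_le_add_left hrle _
      _ = 3 * r / α := by ring
end

section
/- There exists an absolute constant C (one may take C = 3) such that the following holds for every 0 < ρ < 1/2. Let f : ℝ^d → ℝ^d be a C¹ map such that (1) the linear map f'(0) : ℝ^d → ℝ^d is ρ^{-1}-bi-Lipschitz, and (2) the map f' : ℝ^d → End(ℝ^d) is ρ^{-1}-Lipschitz. Then f induces a ρ^{-C}-bi-Lipschitz C¹-diffeomorphism from the ball B(0,ρ^C) onto its image. -/
open Metric Set Topology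

/-- **Quantitative Inverse Function Theorem.** There is an absolute constant `C` (one may take
`C = 3`) such that for every `0 < ρ < 1/2`: if `f : ℝ^d → ℝ^d` is `C¹`, `f'(0)` is
`ρ⁻¹`-bi-Lipschitz, and `f'` is `ρ⁻¹`-Lipschitz (operator norm), then `f` induces a
`ρ^{-C}`-bi-Lipschitz `C¹`-diffeomorphism from `B(0,ρ^C)` onto its image. -/
theorem quantitative_inverse_function_theorem :
    ∃ C : ℕ, ∀ (d : ℕ) (ρ : ℝ), 0 < ρ → ρ < 1/2 →
      ∀ f : EuclideanSpace ℝ (Fin d) → EuclideanSpace ℝ (Fin d),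
        ContDiff ℝ 1 f →
        (∀ v : EuclideanSpace ℝ (Fin d), ‖fderiv ℝ f 0 v‖ ≤ ρ⁻¹ * ‖v‖) →
        (∀ v : EuclideanSpace ℝ (Fin d), ρ * ‖v‖ ≤ ‖fderiv ℝ f 0 v‖) →
        (∀ x y : EuclideanSpace ℝ (Fin d), ‖fderiv ℝ f x - fderiv ℝ f y‖ ≤ ρ⁻¹ * ‖x - y‖) →
        Set.InjOn f (Metric.ball 0 (ρ ^ C)) ∧
        (∀ x ∈ Metric.ball (0 : EuclideanSpace ℝ (Fin d)) (ρ ^ C),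
          ∀ y ∈ Metric.ball (0 : EuclideanSpace ℝ (Fin d)) (ρ ^ C),
            ρ ^ C * dist x y ≤ dist (f x) (f y) ∧ dist (f x) (f y) ≤ (ρ ^ C)⁻¹ * dist x y) ∧
        (∃ g : EuclideanSpace ℝ (Fin d) → EuclideanSpace ℝ (Fin d),
          ContDiffOn ℝ 1 g (f '' Metric.ball 0 (ρ ^ C)) ∧
          ∀ x ∈ Metric.ball (0 : EuclideanSpace ℝ (Fin d)) (ρ ^ C), g (f x) = x) := by
  refine ⟨3, fun d ρ hρ hρ2 f hf hub hlb hLip => ?_⟩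
  have hρ3 : (0:ℝ) < ρ ^ 3 := by positivity
  have hdiff : ∀ z : EuclideanSpace ℝ (Fin d), DifferentiableAt ℝ f z := fun z =>
    (hf.differentiable one_ne_zero).differentiableAt
  -- derivative close to A on the ball
  have hclose : ∀ z ∈ ball (0 : EuclideanSpace ℝ (Fin d)) (ρ ^ 3),
      ‖fderiv ℝ f z - fderiv ℝ f 0‖ ≤ ρ ^ 2 := by
    intro z hz
    have h1 := hLip z 0
    have h2 : ‖z - 0‖ < ρ ^ 3 := by
      simpa [dist_eq_norm] using mem_ball.mp hz
    have h3 : ρ⁻¹ * ‖z - 0‖ ≤ ρ⁻¹ * ρ ^ 3 :=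
      mul_le_mul_of_nonneg_left h2.le (by positivity)
    have h4 : ρ⁻¹ * ρ ^ 3 = ρ ^ 2 := by field_simp
    linarith
  -- mean value estimate
  have hkey : ∀ x ∈ ball (0 : EuclideanSpace ℝ (Fin d)) (ρ ^ 3),
      ∀ y ∈ ball (0 : EuclideanSpace ℝ (Fin d)) (ρ ^ 3),
      ‖f y - f x - fderiv ℝ f 0 (y - x)‖ ≤ ρ ^ 2 * ‖y - x‖ := fun x hx y hy =>
    (convex_ball (0 : EuclideanSpace ℝ (Fin d)) (ρ ^ 3)).norm_image_sub_le_of_norm_fderiv_le'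
      (fun z _ => hdiff z) hclose hx hy
  -- lower bi-Lipschitz bound
  have hlow : ∀ x ∈ ball (0 : EuclideanSpace ℝ (Fin d)) (ρ ^ 3),
      ∀ y ∈ ball (0 : EuclideanSpace ℝ (Fin d)) (ρ ^ 3),
      ρ ^ 3 * ‖y - x‖ ≤ ‖f y - f x‖ := by
    intro x hx y hy
    have h1 := hlb (y - x)
    have h2 := hkey x hx y hy
    have h3 := norm_sub_norm_le (fderiv ℝ f 0 (y - x)) (f y - f x)
    have h3' : ‖fderiv ℝ f 0 (y - x) - (f y - f x)‖ = ‖f y - f x - fderiv ℝ f 0 (y - x)‖ :=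
      norm_sub_rev _ _
    have hcoef : (0:ℝ) ≤ ρ - ρ ^ 2 - ρ ^ 3 := by nlinarith
    nlinarith [mul_nonneg hcoef (norm_nonneg (y - x))]
  -- upper bi-Lipschitz bound
  have hup : ∀ x ∈ ball (0 : EuclideanSpace ℝ (Fin d)) (ρ ^ 3),
      ∀ y ∈ ball (0 : EuclideanSpace ℝ (Fin d)) (ρ ^ 3),
      ‖f y - f x‖ ≤ (ρ ^ 3)⁻¹ * ‖y - x‖ := by
    intro x hx y hy
    have h1 := hub (y - x)
    have h2 := hkey x hx y hy
    have h3 := norm_sub_norm_le (f y - f x) (fderiv ℝ f 0 (y - x))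
    have h4 : ρ⁻¹ + ρ ^ 2 ≤ (ρ ^ 3)⁻¹ := by
      rw [← sub_nonneg]
      have heq : (ρ ^ 3)⁻¹ - (ρ⁻¹ + ρ ^ 2) = (1 - ρ ^ 2 - ρ ^ 5) / ρ ^ 3 := by
        field_simp; ring
      rw [heq]
      apply div_nonneg _ hρ3.le
      have h5 : ρ ^ 5 ≤ ρ ^ 2 := pow_le_pow_of_le_one hρ.le (by linarith) (by norm_num)
      nlinarith
    nlinarith [mul_le_mul_of_nonneg_right h4 (norm_nonneg (y - x))]
  -- injectivity
  have hinjOn : Set.InjOn f (ball (0 : EuclideanSpace ℝ (Fin d)) (ρ ^ 3)) := by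
    intro x hx y hy hxy
    have h := hlow x hx y hy
    rw [hxy, sub_self, norm_zero] at h
    have hle : ‖y - x‖ ≤ 0 := by
      by_contra hpos
      push_neg at hpos
      nlinarith [mul_pos hρ3 hpos]
    have : y - x = 0 := norm_le_zero_iff.mp hle
    exact (sub_eq_zero.mp this).symm
  refine ⟨hinjOn, ?_, ?_⟩
  · intro x hx y hy
    constructor
    · rw [dist_eq_norm, dist_eq_norm]
      simpa [norm_sub_rev] using hlow y hy x hx
    · rw [dist_eq_norm, dist_eq_norm]
      simpa [norm_sub_rev] using hup y hy x hx
  -- the inverse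
  · refine ⟨Function.invFunOn f (ball (0 : EuclideanSpace ℝ (Fin d)) (ρ ^ 3)), ?_, ?_⟩
    · intro p hp
      obtain ⟨x, hx, rfl⟩ := hp
      -- invertibility of the derivative at x
      have hAxlow : ∀ v : EuclideanSpace ℝ (Fin d),
          (ρ - ρ ^ 2) * ‖v‖ ≤ ‖fderiv ℝ f x v‖ := by
        intro v
        have h1 := hlb v
        have h2 : ‖(fderiv ℝ f x - fderiv ℝ f 0) v‖ ≤ ‖fderiv ℝ f x - fderiv ℝ f 0‖ * ‖v‖ :=
          (fderiv ℝ f x - fderiv ℝ f 0).le_opNorm v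
        have h3 : ‖fderiv ℝ f x - fderiv ℝ f 0‖ ≤ ρ ^ 2 := hclose x hx
        have h4 : (fderiv ℝ f x - fderiv ℝ f 0) v = fderiv ℝ f x v - fderiv ℝ f 0 v := rfl
        rw [h4, norm_sub_rev] at h2
        have h5 : ‖fderiv ℝ f 0 v‖ - ‖fderiv ℝ f x v‖ ≤ ‖fderiv ℝ f 0 v - fderiv ℝ f x v‖ :=
          norm_sub_norm_le _ _
        nlinarith [norm_nonneg v, norm_nonneg (fderiv ℝ f x v)]
      have hinj : Function.Injective (fderiv ℝ f x) := by
        intro a b hab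
        have h := hAxlow (a - b)
        rw [map_sub, hab, sub_self, norm_zero] at h
        have hcoef : (0:ℝ) < ρ - ρ ^ 2 := by nlinarith
        have hle : ‖a - b‖ ≤ 0 := by
          by_contra hpos
          push_neg at hpos
          nlinarith [mul_pos hcoef hpos]
        exact sub_eq_zero.mp (norm_le_zero_iff.mp hle)
      have hsurj : Function.Surjective (fderiv ℝ f x) :=
        LinearMap.injective_iff_surjective.mp hinj
      let eL : EuclideanSpace ℝ (Fin d) ≃ₗ[ℝ] EuclideanSpace ℝ (Fin d) :=
        LinearEquiv.ofBijective ((fderiv ℝ f x : _) :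
          EuclideanSpace ℝ (Fin d) →ₗ[ℝ] EuclideanSpace ℝ (Fin d)) ⟨hinj, hsurj⟩
      let e : EuclideanSpace ℝ (Fin d) ≃L[ℝ] EuclideanSpace ℝ (Fin d) :=
        eL.toContinuousLinearEquiv
      have hcoe : (e : EuclideanSpace ℝ (Fin d) →L[ℝ] EuclideanSpace ℝ (Fin d))
          = fderiv ℝ f x := by ext v; rfl
      have hasF : HasFDerivAt f
          (e : EuclideanSpace ℝ (Fin d) →L[ℝ] EuclideanSpace ℝ (Fin d)) x := by
        rw [hcoe]; exact (hdiff x).hasFDerivAt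
      have hfc : ContDiffAt ℝ 1 f x := hf.contDiffAt
      have hgc : ContDiffAt ℝ 1 (hfc.localInverse hasF one_ne_zero) (f x) :=
        hfc.to_localInverse hasF one_ne_zero
      have hev : ∀ᶠ z in nhds x, (hfc.localInverse hasF one_ne_zero) (f z) = z :=
        (hfc.hasStrictFDerivAt' hasF one_ne_zero).eventually_left_inverse
      obtain ⟨δ, hδ, hδev⟩ := Metric.eventually_nhds_iff.mp hev
      apply (hgc.contDiffWithinAt).congr_of_eventuallyEq
      · rw [Filter.EventuallyEq, eventually_nhdsWithin_iff]
        apply Metric.eventually_nhds_iff.mpr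
        refine ⟨ρ ^ 3 * δ, by positivity, ?_⟩
        rintro y hy ⟨z, hz, rfl⟩
        have hd : ρ ^ 3 * dist z x ≤ dist (f z) (f x) := by
          rw [dist_eq_norm, dist_eq_norm]
          simpa [norm_sub_rev] using hlow x hx z hz
        have hzx : dist z x < δ := by
          by_contra h
          push_neg at h
          have h2 : ρ ^ 3 * δ ≤ ρ ^ 3 * dist z x :=
            mul_le_mul_of_nonneg_left h hρ3.le
          linarith [lt_of_le_of_lt (h2.trans hd) hy]
        rw [hδev hzx, hinjOn.leftInvOn_invFunOn hz]
      · rw [hinjOn.leftInvOn_invFunOn hx, hfc.localInverse_apply_image hasF one_ne_zero]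
    · intro x hx
      exact hinjOn.leftInvOn_invFunOn hx
end

section
/- For every positive integer d there exists a constant C (one may take C = 2d) such that the following holds. Let 0 < ρ ≤ 1/2 and let (u₁,…,u_d) be a family of unit vectors in a Euclidean space E of dimension d such that for each i ∈ {1,…,d}, d(u_i, span(u₁,…,u_{i-1})) ≥ ρ. Then the linear map θ : ℝ^d → E, (t_i) ↦ Σ t_i u_i, is ρ^{-C}-bi-Lipschitz (ℝ^d Euclidean). -/
open Metric Set Topology

/-- For every `d ≥ 1` there is `C` (one may take `C = 2d`) such that: if `0 < ρ ≤ 1/2` and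
`u₁,…,u_d` are unit vectors of a `d`-dimensional Euclidean space `E` with
`d(uᵢ, span(u₁,…,u_{i-1})) ≥ ρ` for all `i`, then `θ : (tᵢ) ↦ Σ tᵢ uᵢ` is
`ρ^{-C}`-bi-Lipschitz. -/
theorem almost_orthogonal_basis_biLipschitz
    (d : ℕ) (hd : 0 < d) :
    ∃ C : ℕ, ∀ (E : Type) (_ : NormedAddCommGroup E) (_ : InnerProductSpace ℝ E)
      (_ : FiniteDimensional ℝ E), Module.finrank ℝ E = d →
      ∀ ρ : ℝ, 0 < ρ → ρ ≤ 1/2 →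
      ∀ u : Fin d → E, (∀ i, ‖u i‖ = 1) →
      (∀ i : Fin d,
        ρ ≤ Metric.infDist (u i)
          (Submodule.span ℝ (u '' {j : Fin d | (j : ℕ) < (i : ℕ)}) : Set E)) →
      ∀ s t : EuclideanSpace ℝ (Fin d),
        ρ ^ C * ‖s - t‖ ≤ ‖(∑ i, s i • u i) - (∑ i, t i • u i)‖ ∧
        ‖(∑ i, s i • u i) - (∑ i, t i • u i)‖ ≤ (ρ ^ C)⁻¹ * ‖s - t‖ := by
  refine ⟨2 * d, ?_⟩
  intro E _ _ _ hrank ρ hρ0 hρ u hu hdist s t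
  have hρne : ρ ≠ 0 := ne_of_gt hρ0
  set v : EuclideanSpace ℝ (Fin d) := s - t with hv
  have hsum : (∑ i, s i • u i) - (∑ i, t i • u i) = ∑ i, v i • u i := by
    rw [← Finset.sum_sub_distrib]
    refine Finset.sum_congr rfl fun i _ => ?_
    have : v i = s i - t i := rfl
    rw [this, sub_smul]
  rw [hsum]
  set w : E := ∑ i, v i • u i with hw
  set ε := ‖w‖ with hε
  have hε0 : 0 ≤ ε := norm_nonneg _
  have hnorm_smul : ∀ j, ‖v j • u j‖ = |v j| := fun j => by
    rw [norm_smul, hu, mul_one, Real.norm_eq_abs]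
  have hsum_abs : ∀ S : Finset (Fin d), ‖∑ j ∈ S, v j • u j‖ ≤ ∑ j ∈ S, |v j| := by
    intro S
    calc ‖∑ j ∈ S, v j • u j‖ ≤ ∑ j ∈ S, ‖v j • u j‖ := norm_sum_le _ _
      _ = ∑ j ∈ S, |v j| := by simp [hnorm_smul]
  -- Step 1: partial sums dominate coefficients
  have key : ∀ i : Fin d,
      ρ * |v i| ≤ ‖∑ j ∈ Finset.univ.filter (fun j : Fin d => (j : ℕ) ≤ (i : ℕ)), v j • u j‖ := by
    intro i
    rcases eq_or_ne (v i) 0 with h0 | h0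
    · simp only [h0, abs_zero, mul_zero]
      exact norm_nonneg _
    · set x : E := ∑ j ∈ Finset.univ.filter (fun j : Fin d => (j : ℕ) < (i : ℕ)), v j • u j
        with hx
      have hxmem : x ∈ Submodule.span ℝ (u '' {j : Fin d | (j : ℕ) < (i : ℕ)}) := by
        refine Submodule.sum_mem _ fun j hj => Submodule.smul_mem _ _ (Submodule.subset_span ?_)
        exact Set.mem_image_of_mem u (by simpa using hj)
      have hsplit : ∑ j ∈ Finset.univ.filter (fun j : Fin d => (j : ℕ) ≤ (i : ℕ)), v j • u j
          = v i • u i + x := by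
        rw [hx]
        have hins : Finset.univ.filter (fun j : Fin d => (j : ℕ) ≤ (i : ℕ))
            = insert i (Finset.univ.filter (fun j : Fin d => (j : ℕ) < (i : ℕ))) := by
          ext j
          simp [Fin.ext_iff]
          omega
        rw [hins, Finset.sum_insert (by simp)]
      have hmem' : (-(v i)⁻¹) • x ∈
          (Submodule.span ℝ (u '' {j : Fin d | (j : ℕ) < (i : ℕ)}) : Set E) :=
        Submodule.smul_mem _ _ hxmem
      have h1 : ρ ≤ ‖u i - (-(v i)⁻¹) • x‖ := by
        have h2 := (hdist i).trans (Metric.infDist_le_dist_of_mem hmem')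
        rwa [dist_eq_norm] at h2
      rw [neg_smul, sub_neg_eq_add] at h1
      calc ρ * |v i| ≤ ‖u i + (v i)⁻¹ • x‖ * |v i| :=
            mul_le_mul_of_nonneg_right h1 (abs_nonneg _)
        _ = ‖v i • (u i + (v i)⁻¹ • x)‖ := by
            rw [norm_smul, Real.norm_eq_abs, mul_comm]
        _ = ‖v i • u i + x‖ := by
            rw [smul_add, smul_smul, mul_inv_cancel₀ h0, one_smul]
        _ = _ := by rw [hsplit]
  -- Step 2
  have step2 : ∀ i : Fin d,
      ρ * |v i| ≤ ε + ∑ j ∈ Finset.univ.filter (fun j : Fin d => (i : ℕ) < (j : ℕ)), |v j| := by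
    intro i
    refine (key i).trans ?_
    have hsplitw : w = (∑ j ∈ Finset.univ.filter (fun j : Fin d => (j : ℕ) ≤ (i : ℕ)), v j • u j)
        + ∑ j ∈ Finset.univ.filter (fun j : Fin d => (i : ℕ) < (j : ℕ)), v j • u j := by
      rw [hw, ← Finset.sum_filter_add_sum_filter_not Finset.univ
        (fun j : Fin d => (j : ℕ) ≤ (i : ℕ))]
      congr 1
      refine Finset.sum_congr ?_ fun _ _ => rfl
      ext j; simp [not_le]
    have heq : ∑ j ∈ Finset.univ.filter (fun j : Fin d => (j : ℕ) ≤ (i : ℕ)), v j • u j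
        = w - ∑ j ∈ Finset.univ.filter (fun j : Fin d => (i : ℕ) < (j : ℕ)), v j • u j := by
      rw [hsplitw]; abel
    rw [heq]
    calc ‖w - _‖ ≤ ‖w‖ + ‖∑ j ∈ Finset.univ.filter (fun j : Fin d => (i : ℕ) < (j : ℕ)),
          v j • u j‖ := norm_sub_le _ _
      _ ≤ ε + ∑ j ∈ Finset.univ.filter (fun j : Fin d => (i : ℕ) < (j : ℕ)), |v j| := by
          exact add_le_add le_rfl (hsum_abs _)
  -- Step 3: downward induction
  have main : ∀ k, k ≤ d →
      ∑ j ∈ Finset.univ.filter (fun j : Fin d => d - k ≤ (j : ℕ)), |v j|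
        ≤ ε * ((2 / ρ) ^ k - 1) := by
    intro k
    induction k with
    | zero =>
      intro _
      have he : Finset.univ.filter (fun j : Fin d => d - 0 ≤ (j : ℕ)) = ∅ := by
        ext j
        simp only [Finset.mem_filter, Finset.mem_univ, true_and, Finset.notMem_empty,
          iff_false, not_le]
        omega
      rw [he]
      simp
    | succ k ih =>
      intro hk
      have hk' := ih (Nat.le_of_succ_le hk)
      set i : Fin d := ⟨d - (k + 1), by omega⟩ with hi
      have hins : Finset.univ.filter (fun j : Fin d => d - (k + 1) ≤ (j : ℕ))
          = insert i (Finset.univ.filter (fun j : Fin d => d - k ≤ (j : ℕ))) := by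
        ext j
        simp only [Finset.mem_filter, Finset.mem_univ, true_and, Finset.mem_insert,
          Fin.ext_iff, hi]
        omega
      have hnot : i ∉ Finset.univ.filter (fun j : Fin d => d - k ≤ (j : ℕ)) := by
        simp only [Finset.mem_filter, Finset.mem_univ, true_and, not_le, hi]
        omega
      have hIoi : Finset.univ.filter (fun j : Fin d => (i : ℕ) < (j : ℕ))
          = Finset.univ.filter (fun j : Fin d => d - k ≤ (j : ℕ)) := by
        ext j
        simp only [Finset.mem_filter, Finset.mem_univ, true_and, hi]
        omega
      rw [hins, Finset.sum_insert hnot]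
      set F := ∑ j ∈ Finset.univ.filter (fun j : Fin d => d - k ≤ (j : ℕ)), |v j| with hF
      have hF0 : 0 ≤ F := Finset.sum_nonneg fun j _ => abs_nonneg _
      have h2 := step2 i
      rw [hIoi, ← hF] at h2
      have hA : (1 : ℝ) ≤ (2 / ρ) ^ k := one_le_pow₀ (by
        rw [le_div_iff₀ hρ0]; linarith)
      have hρF : ρ * F ≤ F := by nlinarith
      have hρε : ρ * ε ≤ ε := by nlinarith
      have hgoal : ρ * (|v i| + F) ≤ ρ * (ε * ((2 / ρ) ^ (k + 1) - 1)) := by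
        have heq2 : ρ * (ε * ((2 / ρ) ^ (k + 1) - 1)) = 2 * ε * (2 / ρ) ^ k - ρ * ε := by
          rw [pow_succ]
          field_simp
        rw [heq2]
        nlinarith [hk', h2, hρF, hρε]
      exact le_of_mul_le_mul_left (by linarith [hgoal]) hρ0
  -- coordinate bounds
  have habs_le_norm : ∀ j : Fin d, |v j| ≤ ‖v‖ := by
    intro j
    rw [EuclideanSpace.norm_eq]
    have h1 : |v j| = Real.sqrt (‖v j‖ ^ 2) := by
      rw [Real.sqrt_sq_eq_abs, Real.norm_eq_abs, abs_abs]
    rw [h1]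
    apply Real.sqrt_le_sqrt
    exact Finset.single_le_sum (f := fun j : Fin d => ‖v j‖ ^ 2) (fun j _ => sq_nonneg _)
      (Finset.mem_univ j)
  have hnorm_le_sum : ‖v‖ ≤ ∑ j, |v j| := by
    rw [EuclideanSpace.norm_eq]
    have h1 : ∑ j, ‖v j‖ ^ 2 ≤ (∑ j, |v j|) ^ 2 := by
      have := Finset.sum_sq_le_sq_sum_of_nonneg
        (f := fun j : Fin d => |v j|) (s := Finset.univ) (fun j _ => abs_nonneg _)
      simpa [Real.norm_eq_abs] using this
    calc Real.sqrt (∑ j, ‖v j‖ ^ 2) ≤ Real.sqrt ((∑ j, |v j|) ^ 2) := Real.sqrt_le_sqrt h1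
      _ = ∑ j, |v j| := Real.sqrt_sq (Finset.sum_nonneg fun j _ => abs_nonneg _)
  have hfull : ∑ j, |v j| ≤ ε * ((2 / ρ) ^ d - 1) := by
    have hu2 : Finset.univ.filter (fun j : Fin d => d - d ≤ (j : ℕ)) = Finset.univ := by
      ext j; simp
    have := main d le_rfl
    rwa [hu2] at this
  constructor
  · -- lower bound
    have h1 : ρ ^ (2 * d) * ‖v‖ ≤ ρ ^ (2 * d) * (ε * ((2 / ρ) ^ d - 1)) := by
      apply mul_le_mul_of_nonneg_left (hnorm_le_sum.trans hfull) (by positivity)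
    have h2 : ρ ^ (2 * d) * (ε * ((2 / ρ) ^ d - 1)) ≤ ε := by
      have heq : ρ ^ (2 * d) * (ε * ((2 / ρ) ^ d - 1)) = ε * ((2 * ρ) ^ d - ρ ^ (2 * d)) := by
        rw [two_mul, pow_add, mul_pow, div_pow]
        field_simp
      rw [heq]
      have h3 : (2 * ρ) ^ d ≤ 1 := pow_le_one₀ (by linarith) (by linarith)
      have h4 : 0 ≤ ρ ^ (2 * d) := by positivity
      nlinarith
    linarith
  · -- upper bound
    have h1 : ε ≤ ∑ j, |v j| := by
      have := hsum_abs Finset.univ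
      simpa [← hw] using this
    have h2 : ∑ j, |v j| ≤ (d : ℝ) * ‖v‖ := by
      calc ∑ j, |v j| ≤ ∑ _j : Fin d, ‖v‖ := Finset.sum_le_sum fun j _ => habs_le_norm j
        _ = (d : ℝ) * ‖v‖ := by simp [Finset.sum_const, nsmul_eq_mul]
    have h3 : (d : ℝ) ≤ (ρ ^ (2 * d))⁻¹ := by
      have hd2 : (d : ℝ) ≤ (2 : ℝ) ^ (2 * d) := by
        have := Nat.lt_two_pow_self (n := 2 * d)
        have hdd : d ≤ 2 * d := by omega
        exact_mod_cast (hdd.trans this.le)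
      have hinv : (2 : ℝ) ≤ ρ⁻¹ := by
        have := inv_anti₀ hρ0 hρ
        norm_num at this
        linarith
      have h5 : (2 : ℝ) ^ (2 * d) ≤ ρ⁻¹ ^ (2 * d) :=
        pow_le_pow_left₀ (by norm_num) hinv _
      rw [← inv_pow]
      linarith
    have hv0 : 0 ≤ ‖v‖ := norm_nonneg _
    calc ε ≤ (d : ℝ) * ‖v‖ := h1.trans h2
      _ ≤ (ρ ^ (2 * d))⁻¹ * ‖v‖ := mul_le_mul_of_nonneg_right h3 hv0
end
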